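/- Let d ≥ 1 and let ψ_1, …, ψ_{d²} be unit vectors in ℂ^d. Then the following are equivalent: (i) Σ_{I=1}^{d²} |ψ_I⟩⟨ψ_I| = d·1_d and |⟨ψ_I, ψ_J⟩|² = 1/(d+1) for all I ≠ J (that is, the ψ_I form a SIC); (ii) Σ_{I=1}^{d²} |ψ_I ⊗ ψ_I⟩⟨ψ_I ⊗ ψ_I| = (2d/(d+1))·Π_sym, where Π_sym is the orthogonal projection of ℂ^d ⊗ ℂ^d onto the symmetric subspace, i.e. the matrix with entries Π_sym((i,j),(k,l)) = (1/2)(δ_{ik}δ_{jl} + δ_{il}δ_{jk}). In other words, {ψ_I} is a SIC if and only if {ψ_I ⊗ ψ_I} is a tight frame for the symmetric subspace of ℂ^d ⊗ ℂ^d. -/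

import Mathlib

open Matrix Complex

/-- Rank-one projector `|x⟩⟨x|` as a matrix. -/
noncomputable def outer {n : Type*} [Fintype n] (x : n → ℂ) : Matrix n n ℂ :=
  Matrix.of fun i j => x i * star (x j)

/-- The standard Hermitian inner product `⟨x, y⟩`, antilinear in the first slot. -/
noncomputable def cInner {n : Type*} [Fintype n] (x y : n → ℂ) : ℂ :=
  ∑ k, star (x k) * y k

/-- The orthogonal projection onto the symmetric subspace of `ℂ^d ⊗ ℂ^d`. -/
noncomputable def symProj (d : ℕ) : Matrix (Fin d × Fin d) (Fin d × Fin d) ℂ :=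
  Matrix.of fun p q =>
    (1 / 2 : ℂ) * ((if p.1 = q.1 then 1 else 0) * (if p.2 = q.2 then 1 else 0)
      + (if p.1 = q.2 then 1 else 0) * (if p.2 = q.1 then 1 else 0))

noncomputable def tr2 {n : Type*} [Fintype n] (A B : Matrix n n ℂ) : ℂ :=
  ∑ p, ∑ q, A p q * B q p

lemma star_cInner {n : Type*} [Fintype n] (x y : n → ℂ) : star (cInner x y) = cInner y x := by
  simp [cInner, mul_comm]

lemma cInner_pair {d : ℕ} (x y : Fin d → ℂ) :
    cInner (fun p : Fin d × Fin d => x p.1 * x p.2) (fun p : Fin d × Fin d => y p.1 * y p.2)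
      = (cInner x y) ^ 2 := by
  simp only [cInner, Fintype.sum_prod_type, sq, Finset.sum_mul_sum]
  refine Finset.sum_congr rfl fun i _ => Finset.sum_congr rfl fun j _ => ?_
  simp only [StarMul.star_mul]
  ring

lemma tr2_outer_outer {n : Type*} [Fintype n] (x y : n → ℂ) :
    tr2 (outer x) (outer y) = cInner x y * cInner y x := by
  simp only [tr2, outer, cInner, Matrix.of_apply, Finset.sum_mul_sum]
  rw [Finset.sum_comm]
  refine Finset.sum_congr rfl fun p _ => Finset.sum_congr rfl fun q _ => ?_
  ring

lemma tr2_sum_left {n ι : Type*} [Fintype n] [Fintype ι] (A : ι → Matrix n n ℂ) (B : Matrix n n ℂ) :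
    tr2 (∑ I, A I) B = ∑ I, tr2 (A I) B := by
  simp only [tr2, Matrix.sum_apply, Finset.sum_mul]
  rw [show (∑ p, ∑ q, ∑ I, A I p q * B q p) = ∑ p, ∑ I, ∑ q, A I p q * B q p from
    Finset.sum_congr rfl fun p _ => Finset.sum_comm, Finset.sum_comm]

lemma tr2_comm {n : Type*} [Fintype n] (A B : Matrix n n ℂ) : tr2 A B = tr2 B A := by
  rw [tr2, Finset.sum_comm]
  simp only [tr2, mul_comm]

lemma tr2_smul_right {n : Type*} [Fintype n] (c : ℂ) (A B : Matrix n n ℂ) :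
    tr2 A (c • B) = c * tr2 A B := by
  simp only [tr2, Matrix.smul_apply, smul_eq_mul, Finset.mul_sum]
  exact Finset.sum_congr rfl fun p _ => Finset.sum_congr rfl fun q _ => by ring

lemma tr2_sub_sub {n : Type*} [Fintype n] (A B : Matrix n n ℂ) :
    tr2 (A - B) (A - B) = tr2 A A - tr2 A B - tr2 B A + tr2 B B := by
  simp only [tr2, Matrix.sub_apply, sub_mul, mul_sub, Finset.sum_sub_distrib]
  ring

lemma tr2_outer_symProj {d : ℕ} (x : Fin d → ℂ) :
    tr2 (outer (fun p : Fin d × Fin d => x p.1 * x p.2)) (symProj d) = (cInner x x) ^ 2 := by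
  simp only [tr2, outer, symProj, Matrix.of_apply, Fintype.sum_prod_type]
  simp only [mul_add, mul_ite, ite_mul, mul_one, one_mul, mul_zero, zero_mul,
    Finset.sum_ite_eq, Finset.sum_ite_eq', Finset.mem_univ, if_true, Finset.sum_add_distrib]
  rw [sq, cInner, Finset.sum_mul_sum, ← Finset.sum_add_distrib]
  refine Finset.sum_congr rfl fun i _ => ?_
  rw [← Finset.sum_add_distrib]
  refine Finset.sum_congr rfl fun j _ => ?_
  simp only [StarMul.star_mul]
  ring

lemma tr2_symProj_symProj {d : ℕ} :
    tr2 (symProj d) (symProj d) = ((d:ℂ)^2 + d) / 2 := by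
  simp only [tr2, symProj, Matrix.of_apply, Fintype.sum_prod_type]
  simp only [mul_add, add_mul, mul_ite, ite_mul, mul_one, one_mul, mul_zero, zero_mul,
    Finset.sum_ite_eq, Finset.sum_ite_eq', Finset.mem_univ, if_true, Finset.sum_add_distrib]
  simp only [Finset.sum_const, Finset.card_univ, Fintype.card_fin, nsmul_eq_mul]
  ring

lemma tr2_one_outer {n : Type*} [Fintype n] [DecidableEq n] (x : n → ℂ) :
    tr2 (1 : Matrix n n ℂ) (outer x) = cInner x x := by
  simp only [tr2, Matrix.one_apply, outer, Matrix.of_apply, ite_mul, one_mul, zero_mul,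
    Finset.sum_ite_eq, Finset.sum_ite_eq', Finset.mem_univ, if_true, cInner]
  exact Finset.sum_congr rfl fun p _ => mul_comm _ _

lemma symProj_symm {d : ℕ} (p q : Fin d × Fin d) : symProj d q p = symProj d p q := by
  simp only [symProj, Matrix.of_apply, eq_comm]
  ring

lemma symProj_star {d : ℕ} (p q : Fin d × Fin d) : star (symProj d p q) = symProj d p q := by
  simp only [symProj, Matrix.of_apply]
  split_ifs <;> simp

lemma outer_star {n : Type*} [Fintype n] (x : n → ℂ) (p q : n) :
    star ((outer x) p q) = (outer x) q p := by
  simp only [outer, Matrix.of_apply, StarMul.star_mul, star_star]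

/-- A family of `d²` unit vectors in `ℂ^d` is a SIC if and only if the doubled
vectors `ψ_I ⊗ ψ_I` form a tight frame for the symmetric subspace of
`ℂ^d ⊗ ℂ^d`, with frame constant `2d/(d+1)`. -/
theorem sic_iff_tight_frame_symmetric_subspace
    (d : ℕ) (hd : 1 ≤ d) (ψ : Fin (d ^ 2) → Fin d → ℂ)
    (hunit : ∀ I, cInner (ψ I) (ψ I) = 1) :
    ((∑ I, outer (ψ I) = (d : ℂ) • (1 : Matrix (Fin d) (Fin d) ℂ)) ∧
      ∀ I J, I ≠ J → ‖cInner (ψ I) (ψ J)‖ ^ 2 = 1 / (d + 1)) ↔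
    (∑ I, outer (fun p : Fin d × Fin d => ψ I p.1 * ψ I p.2)
      = (2 * (d : ℂ) / ((d : ℂ) + 1)) • symProj d) := by
  set c : ℂ := 2 * (d : ℂ) / ((d : ℂ) + 1) with hc
  set φ : Fin (d ^ 2) → Fin d × Fin d → ℂ := fun I p => ψ I p.1 * ψ I p.2 with hφ
  have hd1R : ((d:ℝ) + 1) ≠ 0 := by positivity
  have hd1 : ((d:ℂ) + 1) ≠ 0 := by exact_mod_cast fun h' => hd1R (by exact_mod_cast h')
  have hdsq : 1 ≤ d ^ 2 := Nat.one_le_pow _ _ hd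
  have hφpair : ∀ I J, cInner (φ I) (φ J) = (cInner (ψ I) (ψ J)) ^ 2 := fun I J => cInner_pair _ _
  constructor
  · rintro ⟨hframe, hover⟩
    -- the Gram/trace computation
    have hSS : tr2 (∑ I, outer (φ I)) (∑ I, outer (φ I))
        = (d:ℂ)^2 + ((d:ℂ)^2 * ((d:ℂ)^2 - 1)) * (1/((d:ℂ)+1))^2 := by
      rw [tr2_sum_left]
      have h1 : ∀ I, tr2 (outer (φ I)) (∑ J, outer (φ J))
          = ∑ J, tr2 (outer (φ J)) (outer (φ I)) := fun I => by rw [tr2_comm, tr2_sum_left]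
      have h2 : ∀ I, ∑ J, tr2 (outer (φ J)) (outer (φ I))
          = 1 + ((d:ℂ)^2 - 1) * (1/((d:ℂ)+1))^2 := by
        intro I
        simp only [tr2_outer_outer, hφpair]
        rw [← Finset.add_sum_erase _ _ (Finset.mem_univ I)]
        simp only [hunit, one_pow, one_mul]
        have h3 : ∀ J ∈ Finset.univ.erase I, (cInner (ψ J) (ψ I))^2 * (cInner (ψ I) (ψ J))^2
            = (1/((d:ℂ)+1))^2 := by
          intro J hJ
          have hne : J ≠ I := Finset.ne_of_mem_erase hJ
          have hz : (Complex.normSq (cInner (ψ I) (ψ J)) : ℝ) = 1/((d:ℝ)+1) := by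
            rw [← Complex.sq_norm]
            exact_mod_cast hover I J hne.symm
          have hzs : cInner (ψ J) (ψ I) = star (cInner (ψ I) (ψ J)) := (star_cInner _ _).symm
          calc (cInner (ψ J) (ψ I))^2 * (cInner (ψ I) (ψ J))^2
              = (cInner (ψ I) (ψ J) * star (cInner (ψ I) (ψ J)))^2 := by rw [hzs]; ring
            _ = ((Complex.normSq (cInner (ψ I) (ψ J)) : ℂ))^2 := by
                rw [Complex.star_def, Complex.mul_conj]
            _ = (1/((d:ℂ)+1))^2 := by
                rw [hz]
                push_cast
                ring
        rw [Finset.sum_congr rfl h3, Finset.sum_const,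
          Finset.card_erase_of_mem (Finset.mem_univ I), Finset.card_univ, Fintype.card_fin,
          nsmul_eq_mul, Nat.cast_sub hdsq]
        push_cast
        ring
      rw [Finset.sum_congr rfl fun I _ => (h1 I).trans (h2 I), Finset.sum_const,
        Finset.card_univ, Fintype.card_fin, nsmul_eq_mul]
      push_cast
      ring
    have hSP : tr2 (∑ I, outer (φ I)) (symProj d) = (d:ℂ)^2 := by
      rw [tr2_sum_left]
      have : ∀ I, tr2 (outer (φ I)) (symProj d) = 1 := fun I => by
        rw [hφ, tr2_outer_symProj, hunit, one_pow]
      simp only [this, Finset.sum_const, Finset.card_univ, Fintype.card_fin, nsmul_eq_mul,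
        mul_one]
      push_cast; ring
    have hMM : tr2 (∑ I, outer (φ I) - c • symProj d) (∑ I, outer (φ I) - c • symProj d)
        = 0 := by
      rw [tr2_sub_sub, tr2_smul_right, tr2_comm (c • symProj d) (∑ I, outer (φ I)),
        tr2_smul_right, tr2_smul_right, tr2_comm (c • symProj d) (symProj d), tr2_smul_right,
        hSS, hSP, tr2_symProj_symProj, hc]
      field_simp
      ring
    -- hermiticity of M
    have hherm : ∀ p q, (∑ I, outer (φ I) - c • symProj d) q p
        = star ((∑ I, outer (φ I) - c • symProj d) p q) := by
      intro p q
      have hcstar : star c = c := by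
        rw [hc]
        simp [star_div₀, star_mul']
      simp only [Matrix.sub_apply, Matrix.smul_apply, smul_eq_mul, star_sub, StarMul.star_mul,
        hcstar, symProj_star, Matrix.sum_apply, star_sum, outer_star, symProj_symm]
      ring_nf
    -- sum of squared norms is zero
    have hzero : ∀ p q, (∑ I, outer (φ I) - c • symProj d) p q = 0 := by
      have h1 : ∑ p, ∑ q, (Complex.normSq ((∑ I, outer (φ I) - c • symProj d) p q) : ℂ)
          = 0 := by
        rw [← hMM, tr2]
        refine Finset.sum_congr rfl fun p _ => Finset.sum_congr rfl fun q _ => ?_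
        rw [hherm p q, Complex.star_def, Complex.mul_conj]
      have h2 : ∑ p, ∑ q, Complex.normSq ((∑ I, outer (φ I) - c • symProj d) p q) = 0 := by
        exact_mod_cast h1
      intro p q
      have h3 := (Finset.sum_eq_zero_iff_of_nonneg
        (fun p _ => Finset.sum_nonneg fun q _ => Complex.normSq_nonneg _)).mp h2 p
        (Finset.mem_univ p)
      have h4 := (Finset.sum_eq_zero_iff_of_nonneg
        (fun q _ => Complex.normSq_nonneg _)).mp h3 q (Finset.mem_univ q)
      exact Complex.normSq_eq_zero.mp h4
    ext p q
    have := hzero p q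
    rw [Matrix.sub_apply, sub_eq_zero] at this
    exact this
  · intro hA
    have symProj_ptrace : ∀ i k : Fin d, ∑ j, symProj d (i,j) (k,j)
        = (((d:ℂ)+1)/2) * (if i = k then 1 else 0) := by
      intro i k
      simp only [symProj, Matrix.of_apply]
      simp only [eq_self_iff_true, if_true, mul_add, mul_ite, ite_mul, mul_one, one_mul,
        mul_zero, zero_mul, Finset.sum_add_distrib, Finset.sum_ite_eq, Finset.sum_ite_eq',
        Finset.mem_univ, if_true, Finset.sum_const, Finset.card_univ, Fintype.card_fin,
        nsmul_eq_mul]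
      split_ifs <;> push_cast <;> ring
    have hframe : ∑ I, outer (ψ I) = (d : ℂ) • (1 : Matrix (Fin d) (Fin d) ℂ) := by
      ext i k
      have H : ∑ j, (∑ I, outer (φ I)) (i,j) (k,j) = ∑ j, (c • symProj d) (i,j) (k,j) :=
        Finset.sum_congr rfl fun j _ => by rw [hA]
      have hL : ∑ j, (∑ I, outer (φ I)) (i,j) (k,j) = (∑ I, outer (ψ I)) i k := by
        simp only [Matrix.sum_apply]
        rw [Finset.sum_comm]
        refine Finset.sum_congr rfl fun I _ => ?_
        simp only [outer, Matrix.of_apply, hφ]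
        calc ∑ j, ψ I i * ψ I j * star (ψ I k * ψ I j)
            = (ψ I i * star (ψ I k)) * cInner (ψ I) (ψ I) := by
              rw [cInner, Finset.mul_sum]
              refine Finset.sum_congr rfl fun j _ => ?_
              simp only [StarMul.star_mul]
              ring
          _ = ψ I i * star (ψ I k) := by rw [hunit, mul_one]
      have hR : ∑ j, (c • symProj d) (i,j) (k,j) = (d:ℂ) * (if i = k then 1 else 0) := by
        simp only [Matrix.smul_apply, smul_eq_mul, ← Finset.mul_sum, symProj_ptrace, hc]
        rw [show 2 * (d:ℂ) / ((d:ℂ)+1) * ((((d:ℂ)+1)/2) * (if i = k then 1 else 0))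
            = ((d:ℂ) * (((d:ℂ)+1) / ((d:ℂ)+1))) * (if i = k then 1 else 0) from by ring,
          div_self hd1, mul_one]
      rw [← hL, H, hR]
      simp [Matrix.smul_apply, Matrix.one_apply, mul_ite]
    refine ⟨hframe, fun I J hIJ => ?_⟩
    set x : Fin (d^2) → ℝ := fun K => Complex.normSq (cInner (ψ I) (ψ K)) with hxdef
    set m : ℝ := 1/((d:ℝ)+1) with hm
    have hterm1 : ∀ K, cInner (ψ K) (ψ I) * cInner (ψ I) (ψ K) = ((x K : ℝ) : ℂ) := by
      intro K
      rw [show cInner (ψ K) (ψ I) = star (cInner (ψ I) (ψ K)) from (star_cInner _ _).symm,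
        Complex.star_def, mul_comm, Complex.mul_conj]
    have hterm2 : ∀ K, cInner (φ K) (φ I) * cInner (φ I) (φ K) = (((x K : ℝ) : ℂ))^2 := by
      intro K
      rw [hφpair, hφpair,
        show cInner (ψ K) (ψ I) = star (cInner (ψ I) (ψ K)) from (star_cInner _ _).symm,
        show (star (cInner (ψ I) (ψ K)))^2 * (cInner (ψ I) (ψ K))^2
          = ((cInner (ψ I) (ψ K)) * star (cInner (ψ I) (ψ K)))^2 from by ring,
        Complex.star_def, Complex.mul_conj]
    have hx1 : ∑ K, ((x K : ℝ) : ℂ) = (d:ℂ) := by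
      have h0 := congrArg (fun A => tr2 A (outer (ψ I))) hframe
      simp only [tr2_sum_left, tr2_outer_outer, hterm1] at h0
      rw [h0, tr2_comm, tr2_smul_right, tr2_comm, tr2_one_outer, hunit, mul_one]
    have hx2 : ∑ K, (((x K : ℝ) : ℂ))^2 = c := by
      have h0 := congrArg (fun A => tr2 A (outer (φ I)))
        (show ∑ K, outer (φ K) = c • symProj d from hA)
      simp only [tr2_sum_left, tr2_outer_outer, hterm2] at h0
      rw [h0, tr2_comm, tr2_smul_right]
      have : tr2 (outer (φ I)) (symProj d) = 1 := by
        simp only [hφ]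
        rw [tr2_outer_symProj, hunit, one_pow]
      rw [this, mul_one]
    have hx1R : ∑ K, x K = (d:ℝ) := by exact_mod_cast hx1
    have hx2R : ∑ K, (x K)^2 = 2*(d:ℝ)/((d:ℝ)+1) := by
      have : ∑ K, (((x K : ℝ) : ℂ))^2 = ((2*(d:ℝ)/((d:ℝ)+1) : ℝ) : ℂ) := by
        rw [hx2, hc]; push_cast; ring
      exact_mod_cast this
    have hxI : x I = 1 := by
      rw [hxdef]
      simp only [hunit I]
      exact Complex.normSq_one
    have hsplit1 := Finset.add_sum_erase Finset.univ x (Finset.mem_univ I)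
    have hsplit2 := Finset.add_sum_erase Finset.univ (fun K => (x K)^2) (Finset.mem_univ I)
    have hxI2 : (x I)^2 = 1 := by rw [hxI]; ring
    have hs1 : x I + ∑ K ∈ Finset.univ.erase I, x K = ∑ K, x K := by simpa using hsplit1
    have hs2 : (x I)^2 + ∑ K ∈ Finset.univ.erase I, (x K)^2 = ∑ K, (x K)^2 := by
      simpa using hsplit2
    have e1 : ∑ K ∈ Finset.univ.erase I, x K = (d:ℝ) - 1 := by
      rw [hxI] at hs1
      linarith
    have e2 : ∑ K ∈ Finset.univ.erase I, (x K)^2 = 2*(d:ℝ)/((d:ℝ)+1) - 1 := by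
      rw [hxI2] at hs2
      linarith
    have ecard : (((Finset.univ.erase I).card : ℕ) : ℝ) = (d:ℝ)^2 - 1 := by
      rw [Finset.card_erase_of_mem (Finset.mem_univ I), Finset.card_univ, Fintype.card_fin,
        Nat.cast_sub hdsq]
      push_cast
      ring
    have expand : ∑ K ∈ Finset.univ.erase I, (x K - m)^2
        = (∑ K ∈ Finset.univ.erase I, (x K)^2)
          - (2*m) * (∑ K ∈ Finset.univ.erase I, x K)
          + ((Finset.univ.erase I).card : ℝ) * m^2 := by
      rw [Finset.sum_congr rfl (fun K _ => by ring :
          ∀ K ∈ Finset.univ.erase I, (x K - m)^2 = (x K)^2 - (2*m) * x K + m^2),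
        Finset.sum_add_distrib, Finset.sum_sub_distrib, ← Finset.mul_sum,
        Finset.sum_const, nsmul_eq_mul]
    have hvar : ∑ K ∈ Finset.univ.erase I, (x K - m)^2 = 0 := by
      rw [expand, e1, e2, ecard, hm]
      field_simp
      ring
    have hJmem : J ∈ Finset.univ.erase I :=
      Finset.mem_erase.mpr ⟨Ne.symm hIJ, Finset.mem_univ J⟩
    have hJ0 : (x J - m)^2 = 0 :=
      (Finset.sum_eq_zero_iff_of_nonneg (fun K _ => sq_nonneg _)).mp hvar J hJmem
    have hxJ : x J = m := sub_eq_zero.mp (sq_eq_zero_iff.mp hJ0)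
    rw [Complex.sq_norm]
    rw [hxdef] at hxJ
    simp only at hxJ
    rw [hxJ, hm]
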